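/- Let 0 < H < 1 and define γ_H(k) = (1/2)|k+1|^{2H} + (1/2)|k−1|^{2H} − |k|^{2H} for k ∈ ℤ. Then the kernel (n,m) ↦ γ_H(n−m) is positive semidefinite on ℤ: for every finite family of integers n₁, …, n_N and complex numbers z₁, …, z_N, ∑_{j=1}^N ∑_{l=1}^N γ_H(n_j − n_l) z_j conj(z_l) ≥ 0 (and this sum is real). -/

import Mathlib

open MeasureTheory Set Real

/-- The covariance function of fractional Gaussian noise of Hurst index `H`:
`γ_H(k) = (1/2)|k+1|^{2H} + (1/2)|k−1|^{2H} − |k|^{2H}`. -/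
noncomputable def gammaH (H : ℝ) (k : ℤ) : ℝ :=
  (1 / 2) * |((k + 1 : ℤ) : ℝ)| ^ (2 * H) + (1 / 2) * |((k - 1 : ℤ) : ℝ)| ^ (2 * H)
    - |(k : ℝ)| ^ (2 * H)

namespace Stmt17Aux

/-- The integrand of the Lévy–Khinchine representation of `|t|^α`. -/
noncomputable def lki (α d x : ℝ) : ℝ := (1 - Real.cos (d * x)) * x ^ (-1 - α)

lemma lki_nonneg (α d : ℝ) {x : ℝ} (hx : 0 < x) : 0 ≤ lki α d x := by
  have h1 : Real.cos (d * x) ≤ 1 := Real.cos_le_one _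
  have h2 : (0:ℝ) ≤ x ^ (-1 - α) := Real.rpow_nonneg hx.le _
  have : (0:ℝ) ≤ 1 - Real.cos (d * x) := by linarith
  exact mul_nonneg this h2

lemma lki_integrable {α : ℝ} (hα0 : 0 < α) (hα2 : α < 2) (d : ℝ) :
    IntegrableOn (lki α d) (Ioi (0:ℝ)) := by
  have hcont : ContinuousOn (lki α d) (Ioi (0:ℝ)) := by
    apply ContinuousOn.mul
    · exact (continuous_const.sub (Real.continuous_cos.comp
        (continuous_const.mul continuous_id))).continuousOn
    · intro x hx
      exact (Real.continuousAt_rpow_const x _ (Or.inl (ne_of_gt hx))).continuousWithinAt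
  have hIoc : IntegrableOn (lki α d) (Ioc (0:ℝ) 1) := by
    have hbound : IntegrableOn (fun x : ℝ => d ^ 2 / 2 * x ^ (1 - α)) (Ioc (0:ℝ) 1) := by
      have : IntervalIntegrable (fun x : ℝ => x ^ (1 - α)) volume 0 1 :=
        intervalIntegral.intervalIntegrable_rpow' (by linarith)
      have h2 := (intervalIntegrable_iff_integrableOn_Ioc_of_le (by norm_num : (0:ℝ) ≤ 1)).mp this
      exact h2.const_mul _
    refine hbound.mono' ((hcont.mono Ioc_subset_Ioi_self).aestronglyMeasurable measurableSet_Ioc) ?_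
    filter_upwards [ae_restrict_mem measurableSet_Ioc] with x hx
    have hx0 : 0 < x := hx.1
    rw [Real.norm_eq_abs, abs_of_nonneg (lki_nonneg α d hx0)]
    have h1 : 1 - Real.cos (d * x) ≤ (d * x) ^ 2 / 2 := by
      have := Real.one_sub_sq_div_two_le_cos (x := d * x)
      linarith
    have h2 : (0:ℝ) ≤ x ^ (-1 - α) := Real.rpow_nonneg hx0.le _
    calc lki α d x ≤ (d * x) ^ 2 / 2 * x ^ (-1 - α) := by
          exact mul_le_mul_of_nonneg_right h1 h2
      _ = d ^ 2 / 2 * (x ^ (2:ℝ) * x ^ (-1 - α)) := by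
          rw [mul_pow]
          rw [← Real.rpow_natCast x 2]
          push_cast
          ring
      _ = d ^ 2 / 2 * x ^ (1 - α) := by
          rw [← Real.rpow_add hx0]
          congr 1
          ring
  have hIoi : IntegrableOn (lki α d) (Ioi (1:ℝ)) := by
    have hbound : IntegrableOn (fun x : ℝ => 2 * x ^ (-1 - α)) (Ioi (1:ℝ)) :=
      (integrableOn_Ioi_rpow_of_lt (by linarith) one_pos).const_mul 2
    refine hbound.mono' ((hcont.mono (Ioi_subset_Ioi (by norm_num))).aestronglyMeasurable measurableSet_Ioi) ?_
    filter_upwards [ae_restrict_mem measurableSet_Ioi] with x hx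
    have hx0 : (0:ℝ) < x := lt_trans one_pos hx
    rw [Real.norm_eq_abs, abs_of_nonneg (lki_nonneg α d hx0)]
    have h1 : 1 - Real.cos (d * x) ≤ 2 := by
      have := Real.neg_one_le_cos (d * x); linarith
    exact mul_le_mul_of_nonneg_right h1 (Real.rpow_nonneg hx0.le _)
  have : Ioc (0:ℝ) 1 ∪ Ioi (1:ℝ) = Ioi (0:ℝ) := Ioc_union_Ioi_eq_Ioi (by norm_num)
  rw [← this]
  exact hIoc.union hIoi


/-- `F(d) = ∫_0^∞ (1 - cos(dx)) x^{-1-α} dx`. -/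
noncomputable def lkF (α d : ℝ) : ℝ := ∫ x in Ioi (0:ℝ), lki α d x

lemma lkF_eq {α : ℝ} (hα0 : 0 < α) (hα2 : α < 2) (d : ℝ) :
    lkF α d = |d| ^ α * lkF α 1 := by
  rcases eq_or_ne d 0 with rfl | hd
  · simp [lkF, lki, Real.zero_rpow hα0.ne']
  · have hb : 0 < |d| := abs_pos.mpr hd
    have h1 : lkF α d = ∫ x in Ioi (0:ℝ), |d| ^ (1 + α) * lki α 1 (|d| * x) := by
      refine setIntegral_congr_fun measurableSet_Ioi (fun x hx => ?_)
      have hx0 : (0:ℝ) < x := hx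
      simp only [lki, one_mul]
      have hc : Real.cos (|d| * x) = Real.cos (d * x) := by
        rcases abs_choice d with h | h
        · rw [h]
        · rw [h]; rw [neg_mul, Real.cos_neg]
      rw [hc]
      rw [Real.mul_rpow (abs_nonneg d) hx0.le]
      rw [show |d| ^ (1 + α) * ((1 - Real.cos (d * x)) * (|d| ^ (-1 - α) * x ^ (-1 - α)))
            = (|d| ^ (1 + α) * |d| ^ (-1 - α)) * ((1 - Real.cos (d * x)) * x ^ (-1 - α)) by ring]
      rw [← Real.rpow_add hb]
      norm_num
    rw [h1, MeasureTheory.integral_const_mul,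
      MeasureTheory.integral_comp_mul_left_Ioi (lki α 1) 0 hb, mul_zero]
    rw [smul_eq_mul, show |d|⁻¹ = |d| ^ (-1 : ℝ) by rw [Real.rpow_neg_one]]
    rw [← mul_assoc, ← Real.rpow_add hb]
    rw [show 1 + α + -1 = α by ring]
    rfl

lemma lkF_one_pos {α : ℝ} (hα0 : 0 < α) (hα2 : α < 2) : 0 < lkF α 1 := by
  have hint : IntegrableOn (lki α 1) (Ioi (0:ℝ)) := lki_integrable hα0 hα2 1
  have h23 : IntegrableOn (lki α 1) (Ioc (2:ℝ) 3) :=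
    hint.mono_set (fun x hx => lt_trans two_pos hx.1)
  have hlow : ∀ x ∈ Ioc (2:ℝ) 3, (3:ℝ) ^ (-1 - α) ≤ lki α 1 x := by
    intro x hx
    have hx2 : (2:ℝ) < x := hx.1
    have hx3 : x ≤ 3 := hx.2
    have hx0 : (0:ℝ) < x := lt_trans two_pos hx2
    have hcos : Real.cos (1 * x) ≤ 0 := by
      rw [one_mul]
      apply Real.cos_nonpos_of_pi_div_two_le_of_le
      · linarith [Real.pi_le_four]
      · linarith [Real.pi_gt_three]
    have h1 : (1:ℝ) ≤ 1 - Real.cos (1 * x) := by linarith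
    have h2 : (3:ℝ) ^ (-1 - α) ≤ x ^ (-1 - α) :=
      Real.rpow_le_rpow_of_nonpos hx0 hx3 (by linarith)
    calc (3:ℝ) ^ (-1 - α) = 1 * (3:ℝ) ^ (-1 - α) := (one_mul _).symm
      _ ≤ (1 - Real.cos (1 * x)) * x ^ (-1 - α) :=
          mul_le_mul h1 h2 (Real.rpow_nonneg (by norm_num) _) (by linarith)
  have hpos : (0:ℝ) < ∫ x in Ioc (2:ℝ) 3, lki α 1 x := by
    have hconst : (∫ x in Ioc (2:ℝ) 3, (3:ℝ) ^ (-1 - α)) ≤ ∫ x in Ioc (2:ℝ) 3, lki α 1 x := by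
      apply setIntegral_mono_on (integrableOn_const (by simp)) h23
        measurableSet_Ioc hlow
    have : (∫ x in Ioc (2:ℝ) 3, (3:ℝ) ^ (-1 - α)) = (3:ℝ) ^ (-1 - α) := by
      rw [setIntegral_const]
      simp [Real.volume_Ioc]
      norm_num
    rw [this] at hconst
    exact lt_of_lt_of_le (Real.rpow_pos_of_pos (by norm_num) _) hconst
  refine lt_of_lt_of_le hpos ?_
  apply setIntegral_mono_set hint
  · filter_upwards [ae_restrict_mem measurableSet_Ioi] with x hx using lki_nonneg α 1 hx
  · exact HasSubset.Subset.eventuallyLE (fun x hx => lt_trans two_pos hx.1)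

/-- Negative definiteness of `|t|^α` for `0 < α < 2`. -/
lemma negdef {α : ℝ} (hα0 : 0 < α) (hα2 : α < 2) {M : Type*} [Fintype M]
    (t : M → ℝ) (w : M → ℝ) (hw : ∑ j, w j = 0) :
    ∑ j, ∑ l, |t j - t l| ^ α * w j * w l ≤ 0 := by
  have hF1 : 0 < lkF α 1 := lkF_one_pos hα0 hα2
  have key : ∑ j, ∑ l, lkF α (t j - t l) * w j * w l ≤ 0 := by
    have hint : ∀ j l : M, IntegrableOn (fun x => lki α (t j - t l) x * w j * w l)
        (Ioi (0:ℝ)) := fun j l => ((lki_integrable hα0 hα2 _).mul_const _).mul_const _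
    have heq : ∑ j, ∑ l, lkF α (t j - t l) * w j * w l
        = ∫ x in Ioi (0:ℝ), ∑ j, ∑ l, lki α (t j - t l) x * w j * w l := by
      rw [MeasureTheory.integral_finset_sum]
      · refine Finset.sum_congr rfl (fun j _ => ?_)
        rw [MeasureTheory.integral_finset_sum]
        · refine Finset.sum_congr rfl (fun l _ => ?_)
          rw [MeasureTheory.integral_mul_const, MeasureTheory.integral_mul_const]
          rfl
        · exact fun l _ => hint j l
      · exact fun j _ => integrable_finset_sum _ (fun l _ => hint j l)
    rw [heq]
    apply setIntegral_nonpos measurableSet_Ioi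
    intro x hx
    have hx0 : (0:ℝ) < x := hx
    set C := ∑ j, w j * Real.cos (t j * x) with hC
    set S := ∑ j, w j * Real.sin (t j * x) with hS
    have expand : ∑ j, ∑ l, (1 - Real.cos ((t j - t l) * x)) * w j * w l
        = (∑ j, w j) ^ 2 - (C ^ 2 + S ^ 2) := by
      have hCsq : C ^ 2 = ∑ j, ∑ l, (w j * Real.cos (t j * x)) * (w l * Real.cos (t l * x)) := by
        rw [sq, Finset.sum_mul_sum]
      have hSsq : S ^ 2 = ∑ j, ∑ l, (w j * Real.sin (t j * x)) * (w l * Real.sin (t l * x)) := by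
        rw [sq, Finset.sum_mul_sum]
      have hWsq : (∑ j, w j) ^ 2 = ∑ j, ∑ l, w j * w l := by
        rw [sq, Finset.sum_mul_sum]
      rw [hCsq, hSsq, hWsq, ← Finset.sum_add_distrib, ← Finset.sum_sub_distrib]
      refine Finset.sum_congr rfl (fun j _ => ?_)
      rw [← Finset.sum_add_distrib, ← Finset.sum_sub_distrib]
      refine Finset.sum_congr rfl (fun l _ => ?_)
      rw [sub_mul (t j) (t l) x, Real.cos_sub]
      ring
    have hfac : ∑ j, ∑ l, lki α (t j - t l) x * w j * w l
        = (∑ j, ∑ l, (1 - Real.cos ((t j - t l) * x)) * w j * w l) * x ^ (-1 - α) := by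
      rw [Finset.sum_mul]
      refine Finset.sum_congr rfl (fun j _ => ?_)
      rw [Finset.sum_mul]
      refine Finset.sum_congr rfl (fun l _ => ?_)
      simp only [lki]; ring
    rw [hfac, expand, hw]
    have h1 : (0:ℝ) ^ 2 - (C ^ 2 + S ^ 2) ≤ 0 := by nlinarith [sq_nonneg C, sq_nonneg S]
    exact mul_nonpos_of_nonpos_of_nonneg h1 (Real.rpow_nonneg hx0.le _)
  have heq2 : ∑ j, ∑ l, |t j - t l| ^ α * w j * w l
      = (∑ j, ∑ l, lkF α (t j - t l) * w j * w l) / lkF α 1 := by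
    rw [Finset.sum_div]
    refine Finset.sum_congr rfl (fun j _ => ?_)
    rw [Finset.sum_div]
    refine Finset.sum_congr rfl (fun l _ => ?_)
    rw [lkF_eq hα0 hα2]
    field_simp
  rw [heq2]
  exact div_nonpos_of_nonpos_of_nonneg key hF1.le


lemma gamma_psd_real {H : ℝ} (hH0 : 0 < H) (hH1 : H < 1) {N : ℕ}
    (n : Fin N → ℤ) (w : Fin N → ℝ) :
    0 ≤ ∑ j, ∑ l, gammaH H (n j - n l) * w j * w l := by
  set α := 2 * H with hα
  have hα0 : 0 < α := by positivity
  have hα2 : α < 2 := by simp only [hα]; linarith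
  set t : Fin N ⊕ Fin N → ℝ := Sum.elim (fun j => (n j : ℝ)) (fun j => (n j : ℝ) + 1) with ht
  set u : Fin N ⊕ Fin N → ℝ := Sum.elim (fun j => -w j) w with hu
  have hsum : ∑ a, u a = 0 := by
    simp [hu, Fintype.sum_sum_type, Finset.sum_neg_distrib]
  have hneg := negdef hα0 hα2 t u hsum
  have key : ∑ j, ∑ l, gammaH H (n j - n l) * w j * w l
      = -(1/2) * ∑ a, ∑ b, |t a - t b| ^ α * u a * u b := by
    simp only [ht, hu, Fintype.sum_sum_type, Sum.elim_inl, Sum.elim_inr]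
    rw [← Finset.sum_add_distrib, Finset.mul_sum]
    refine Finset.sum_congr rfl (fun j _ => ?_)
    rw [← Finset.sum_add_distrib, ← Finset.sum_add_distrib, ← Finset.sum_add_distrib,
      Finset.mul_sum]
    refine Finset.sum_congr rfl (fun l _ => ?_)
    simp only [gammaH]
    push_cast
    rw [show ((n j : ℝ)) - ((n l : ℝ) + 1) = (n j : ℝ) - (n l : ℝ) - 1 by ring,
      show ((n j : ℝ) + 1) - ((n l : ℝ)) = (n j : ℝ) - (n l : ℝ) + 1 by ring,
      show ((n j : ℝ) + 1) - ((n l : ℝ) + 1) = (n j : ℝ) - (n l : ℝ) by ring]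
    ring
  rw [key]
  nlinarith [hneg]

lemma gammaH_symm (H : ℝ) (k : ℤ) : gammaH H (-k) = gammaH H k := by
  simp only [gammaH]
  push_cast
  rw [show -(k:ℝ) + 1 = -((k:ℝ) - 1) by ring, show -(k:ℝ) - 1 = -((k:ℝ) + 1) by ring,
    abs_neg, abs_neg, abs_neg]
  ring

end Stmt17Aux

open Stmt17Aux

/-- For `0 < H < 1`, the kernel `(n,m) ↦ γ_H(n−m)` is positive
semidefinite on `ℤ`: for all integers `n₁, …, n_N` and complex numbers `z₁, …, z_N`,
the sum `∑_j ∑_l γ_H(n_j − n_l) z_j conj(z_l)` is real and nonnegative. -/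
theorem stmt17 (H : ℝ) (hH0 : 0 < H) (hH1 : H < 1)
    (N : ℕ) (n : Fin N → ℤ) (z : Fin N → ℂ) :
    (∑ j : Fin N, ∑ l : Fin N,
        (gammaH H (n j - n l) : ℂ) * z j * (starRingEnd ℂ) (z l)).im = 0 ∧
    0 ≤ (∑ j : Fin N, ∑ l : Fin N,
        (gammaH H (n j - n l) : ℂ) * z j * (starRingEnd ℂ) (z l)).re := by
  have hsymm : ∀ j l : Fin N, gammaH H (n l - n j) = gammaH H (n j - n l) := by
    intro j l
    rw [show n l - n j = -(n j - n l) by ring, gammaH_symm]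
  constructor
  · have him : (∑ j : Fin N, ∑ l : Fin N,
        (gammaH H (n j - n l) : ℂ) * z j * (starRingEnd ℂ) (z l)).im
        = ∑ j : Fin N, ∑ l : Fin N,
            gammaH H (n j - n l) * ((z j).im * (z l).re - (z j).re * (z l).im) := by
      rw [Complex.im_sum]
      refine Finset.sum_congr rfl (fun j _ => ?_)
      rw [Complex.im_sum]
      refine Finset.sum_congr rfl (fun l _ => ?_)
      simp only [Complex.mul_im, Complex.mul_re, Complex.conj_re, Complex.conj_im,
        Complex.ofReal_re, Complex.ofReal_im]
      ring
    rw [him]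
    set S := ∑ j : Fin N, ∑ l : Fin N,
        gammaH H (n j - n l) * ((z j).im * (z l).re - (z j).re * (z l).im) with hSdef
    have hSneg : S = -S := by
      conv_lhs => rw [hSdef, Finset.sum_comm]
      rw [hSdef, ← Finset.sum_neg_distrib]
      refine Finset.sum_congr rfl (fun j _ => ?_)
      rw [← Finset.sum_neg_distrib]
      refine Finset.sum_congr rfl (fun l _ => ?_)
      rw [hsymm]
      ring
    linarith
  · have hre : (∑ j : Fin N, ∑ l : Fin N,
        (gammaH H (n j - n l) : ℂ) * z j * (starRingEnd ℂ) (z l)).re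
        = (∑ j : Fin N, ∑ l : Fin N, gammaH H (n j - n l) * (z j).re * (z l).re)
          + ∑ j : Fin N, ∑ l : Fin N, gammaH H (n j - n l) * (z j).im * (z l).im := by
      rw [Complex.re_sum, ← Finset.sum_add_distrib]
      refine Finset.sum_congr rfl (fun j _ => ?_)
      rw [Complex.re_sum, ← Finset.sum_add_distrib]
      refine Finset.sum_congr rfl (fun l _ => ?_)
      simp only [Complex.mul_re, Complex.mul_im, Complex.conj_re, Complex.conj_im,
        Complex.ofReal_re, Complex.ofReal_im]
      ring
    rw [hre]
    have h1 := gamma_psd_real hH0 hH1 n (fun j => (z j).re)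
    have h2 := gamma_psd_real hH0 hH1 n (fun j => (z j).im)
    have e1 : ∑ j : Fin N, ∑ l : Fin N, gammaH H (n j - n l) * (z j).re * (z l).re
        = ∑ j, ∑ l, gammaH H (n j - n l) * (fun j => (z j).re) j * (fun j => (z j).re) l := rfl
    have e2 : ∑ j : Fin N, ∑ l : Fin N, gammaH H (n j - n l) * (z j).im * (z l).im
        = ∑ j, ∑ l, gammaH H (n j - n l) * (fun j => (z j).im) j * (fun j => (z j).im) l := rfl
    rw [e1, e2]
    linarith
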